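/- arXiv:2005.10934 — 2 statements merged into one kernel-verified Lean document; each statement's English description precedes it below -/
import Mathlib

section
/- Let (Ω, μ) be a probability space and let θ : ℕ → Ω → ℝ be an independent family of random variables, each distributed uniformly on [0, 2π]. Define X i ω = (cos (θ i ω), sin (θ i ω)) ∈ ℝ² and S n = ∑_{i<n} X i. Then for every n, the expected distance from the origin satisfies E[‖S n‖] ≤ √n. -/
open MeasureTheory ProbabilityTheory Real
open scoped ENNReal

/-- **Lemma 2 (paper).** For a 2D random walk with unit step size, where the step
directions `θ i` are independent and uniformly distributed on `[0, 2π]`, the expected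
distance from the origin after `n` steps is at most `√n` (with `n = T`, the SkewFit
scheme on average reaches at most `R₁ = √T` in one episode). -/
theorem expected_distance_randomWalk_2D_le_sqrt
    {Ω : Type*} [MeasurableSpace Ω] (μ : Measure Ω) [IsProbabilityMeasure μ]
    (θ : ℕ → Ω → ℝ) (hmeas : ∀ i, Measurable (θ i))
    (hindep : iIndepFun θ μ)
    (hunif : ∀ i, Measure.map (θ i) μ
      = (ENNReal.ofReal (2 * π))⁻¹ • volume.restrict (Set.Icc (0 : ℝ) (2 * π)))
    (X : ℕ → Ω → EuclideanSpace ℝ (Fin 2))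
    (hX : ∀ i ω, X i ω = ![Real.cos (θ i ω), Real.sin (θ i ω)])
    (S : ℕ → Ω → EuclideanSpace ℝ (Fin 2))
    (hS : ∀ n ω, S n ω = ∑ i ∈ Finset.range n, X i ω) :
    ∀ n : ℕ, ∫ ω, ‖S n ω‖ ∂μ ≤ Real.sqrt n := by
  have h2pi : (0:ℝ) < 2 * π := by positivity
  -- mean of cos and sin under the uniform distribution
  have hmap : ∀ (i : ℕ) (f : ℝ → ℝ), Continuous f →
      ∫ ω, f (θ i ω) ∂μ
        = (2 * π)⁻¹ * ∫ y in Set.Icc (0:ℝ) (2 * π), f y := by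
    intro i f hf
    rw [← integral_map (hmeas i).aemeasurable hf.aestronglyMeasurable, hunif i,
      integral_smul_measure, ENNReal.toReal_inv, ENNReal.toReal_ofReal h2pi.le,
      smul_eq_mul]
  have hIcc : ∀ f : ℝ → ℝ, ∫ y in Set.Icc (0:ℝ) (2 * π), f y = ∫ y in (0:ℝ)..(2 * π), f y := by
    intro f
    rw [intervalIntegral.integral_of_le h2pi.le, integral_Icc_eq_integral_Ioc]
  have hcos : ∀ i, ∫ ω, Real.cos (θ i ω) ∂μ = 0 := by
    intro i
    rw [hmap i _ Real.continuous_cos, hIcc, integral_cos]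
    simp
  have hsin : ∀ i, ∫ ω, Real.sin (θ i ω) ∂μ = 0 := by
    intro i
    rw [hmap i _ Real.continuous_sin, hIcc, integral_sin]
    simp
  -- measurability of S
  have hXmeas : ∀ i, Measurable (X i) := by
    intro i
    have : X i = fun ω => (WithLp.toLp 2 ![Real.cos (θ i ω), Real.sin (θ i ω)] : EuclideanSpace ℝ (Fin 2)) :=
      funext fun ω => by rw [← hX i ω, WithLp.toLp_ofLp]
    rw [this]
    refine (WithLp.measurable_toLp 2 _).comp (measurable_pi_lambda _ ?_)
    intro k
    fin_cases k
    · exact Real.measurable_cos.comp (hmeas i)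
    · exact Real.measurable_sin.comp (hmeas i)
  intro n
  have hSmeas : Measurable (S n) := by
    have : S n = fun ω => ∑ i ∈ Finset.range n, X i ω := funext (hS n)
    rw [this]
    exact Finset.measurable_sum _ fun i _ => hXmeas i
  have hXnorm : ∀ i ω, ‖X i ω‖ = 1 := by
    intro i ω
    rw [EuclideanSpace.norm_eq, hX i ω]
    simp only [Fin.sum_univ_two, Matrix.cons_val_zero, Matrix.cons_val_one, Matrix.head_cons,
      Real.norm_eq_abs, sq_abs]
    rw [Real.cos_sq_add_sin_sq, Real.sqrt_one]
  have hSbound : ∀ ω, ‖S n ω‖ ≤ (n : ℝ) := by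
    intro ω
    rw [hS n ω]
    calc ‖∑ i ∈ Finset.range n, X i ω‖ ≤ ∑ i ∈ Finset.range n, ‖X i ω‖ :=
          norm_sum_le _ _
      _ = (n : ℝ) := by simp [hXnorm]
  -- the pointwise expansion of the squared norm
  have hinner : ∀ i j ω, (inner ℝ (X i ω) (X j ω) : ℝ)
      = Real.cos (θ i ω) * Real.cos (θ j ω) + Real.sin (θ i ω) * Real.sin (θ j ω) := by
    intro i j ω
    simp [PiLp.inner_apply, Fin.sum_univ_two, RCLike.inner_apply, hX i ω, hX j ω]
    ring
  have hexpand : ∀ ω, ‖S n ω‖ ^ 2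
      = ∑ i ∈ Finset.range n, ∑ j ∈ Finset.range n,
          (Real.cos (θ i ω) * Real.cos (θ j ω) + Real.sin (θ i ω) * Real.sin (θ j ω)) := by
    intro ω
    rw [← real_inner_self_eq_norm_sq, hS n ω, sum_inner]
    refine Finset.sum_congr rfl fun i _ => ?_
    rw [inner_sum]
    exact Finset.sum_congr rfl fun j _ => hinner i j ω
  -- bounded measurable functions are integrable
  have hbd : ∀ (F : Ω → ℝ), Measurable F → (∀ ω, |F ω| ≤ 1) → Integrable F μ := by
    intro F hFm hFb
    exact (integrable_const (1:ℝ)).mono' hFm.aestronglyMeasurable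
      (ae_of_all _ fun ω => by simpa using hFb ω)
  have hcc_int : ∀ i j : ℕ, Integrable (fun ω => Real.cos (θ i ω) * Real.cos (θ j ω)) μ := by
    intro i j
    refine hbd _ ((Real.measurable_cos.comp (hmeas i)).mul
      (Real.measurable_cos.comp (hmeas j))) fun ω => ?_
    rw [abs_mul]
    exact mul_le_one₀ (Real.abs_cos_le_one _) (abs_nonneg _) (Real.abs_cos_le_one _)
  have hss_int : ∀ i j : ℕ, Integrable (fun ω => Real.sin (θ i ω) * Real.sin (θ j ω)) μ := by
    intro i j
    refine hbd _ ((Real.measurable_sin.comp (hmeas i)).mul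
      (Real.measurable_sin.comp (hmeas j))) fun ω => ?_
    rw [abs_mul]
    exact mul_le_one₀ (Real.abs_sin_le_one _) (abs_nonneg _) (Real.abs_sin_le_one _)
  have hterm_int : ∀ i j : ℕ, Integrable (fun ω =>
      Real.cos (θ i ω) * Real.cos (θ j ω) + Real.sin (θ i ω) * Real.sin (θ j ω)) μ :=
    fun i j => (hcc_int i j).add (hss_int i j)
  -- the value of each term of the expansion
  have hterm_val : ∀ i j : ℕ, ∫ ω,
      (Real.cos (θ i ω) * Real.cos (θ j ω) + Real.sin (θ i ω) * Real.sin (θ j ω)) ∂μ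
      = if i = j then 1 else 0 := by
    intro i j
    by_cases hij : i = j
    · subst hij
      simp only [if_pos rfl]
      have : ∀ ω, Real.cos (θ i ω) * Real.cos (θ i ω) + Real.sin (θ i ω) * Real.sin (θ i ω)
          = 1 := by
        intro ω
        have := Real.cos_sq_add_sin_sq (θ i ω)
        nlinarith [this]
      rw [integral_congr_ae (ae_of_all _ this)]
      simp
    · simp only [if_neg hij]
      have hind := hindep.indepFun hij
      have hcc : IndepFun (fun ω => Real.cos (θ i ω)) (fun ω => Real.cos (θ j ω)) μ :=
        hind.comp Real.measurable_cos Real.measurable_cos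
      have hss : IndepFun (fun ω => Real.sin (θ i ω)) (fun ω => Real.sin (θ j ω)) μ :=
        hind.comp Real.measurable_sin Real.measurable_sin
      have hic : ∀ k, Integrable (fun ω => Real.cos (θ k ω)) μ := fun k =>
        hbd _ (Real.measurable_cos.comp (hmeas k)) fun ω => Real.abs_cos_le_one _
      have his : ∀ k, Integrable (fun ω => Real.sin (θ k ω)) μ := fun k =>
        hbd _ (Real.measurable_sin.comp (hmeas k)) fun ω => Real.abs_sin_le_one _
      have h1 : ∫ ω, Real.cos (θ i ω) * Real.cos (θ j ω) ∂μ
          = (∫ ω, Real.cos (θ i ω) ∂μ) * ∫ ω, Real.cos (θ j ω) ∂μ :=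
        hcc.integral_fun_mul_eq_mul_integral (hic i).aestronglyMeasurable (hic j).aestronglyMeasurable
      have h2 : ∫ ω, Real.sin (θ i ω) * Real.sin (θ j ω) ∂μ
          = (∫ ω, Real.sin (θ i ω) ∂μ) * ∫ ω, Real.sin (θ j ω) ∂μ :=
        hss.integral_fun_mul_eq_mul_integral (his i).aestronglyMeasurable (his j).aestronglyMeasurable
      rw [integral_add (hcc_int i j) (hss_int i j), h1, h2, hcos, hsin]
      ring
  -- second moment equals n
  have hmoment : ∫ ω, ‖S n ω‖ ^ 2 ∂μ = (n : ℝ) := by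
    rw [integral_congr_ae (ae_of_all _ hexpand)]
    rw [integral_finset_sum _ fun i _ => integrable_finset_sum _ fun j _ => hterm_int i j]
    have : ∀ i ∈ Finset.range n, ∫ ω, (∑ j ∈ Finset.range n,
        (Real.cos (θ i ω) * Real.cos (θ j ω) + Real.sin (θ i ω) * Real.sin (θ j ω))) ∂μ
        = 1 := by
      intro i hi
      rw [integral_finset_sum _ fun j _ => hterm_int i j]
      rw [Finset.sum_congr rfl fun j _ => hterm_val i j]
      simp [Finset.sum_ite_eq, hi]
    rw [Finset.sum_congr rfl this]
    simp
  -- Cauchy–Schwarz via nonnegativity of the variance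
  have hmem : MemLp (fun ω => ‖S n ω‖) 2 μ :=
    MemLp.of_bound hSmeas.norm.aestronglyMeasurable (n : ℝ)
      (ae_of_all _ fun ω => by simpa using hSbound ω)
  have hvar := variance_nonneg (fun ω => ‖S n ω‖) μ
  rw [variance_eq_sub hmem] at hvar
  have hsq : (∫ ω, ‖S n ω‖ ∂μ) ^ 2 ≤ (n : ℝ) := by
    have : (∫ ω, ‖S n ω‖ ^ 2 ∂μ) = (n : ℝ) := hmoment
    have h2 : μ[(fun ω => ‖S n ω‖) ^ 2] = (n : ℝ) := by
      rw [← this]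
      congr 1
    nlinarith [hvar, h2]
  have hnonneg : 0 ≤ ∫ ω, ‖S n ω‖ ∂μ := integral_nonneg fun ω => norm_nonneg _
  exact Real.le_sqrt_of_sq_le (by simpa using hsq)
end

section
/- Let k* be a natural number with k* ≥ 1 and let T be a real number with T ≥ k* + 1. Then k* + √(T − k*) > (1/(k* + 1)) · ∑_{k=0}^{k*} (k + √(T − k)), i.e., the ReachExplore bound R₃ = k* + √(T − k*) strictly exceeds the GoExplore bound R₂ obtained by averaging r_k = k + √(T − k) over the k* + 1 intermediate distances k = 0, 1, …, k*. -/
/-- **Part of Theorem 1 (paper): `R₃ > R₂`.** For a natural number frontier distance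
`k* ≥ 1` and real episode length `T ≥ k* + 1`, the ReachExplore bound
`R₃ = k* + √(T − k*)` strictly exceeds the GoExplore bound
`R₂ = (1/(k*+1)) ∑_{k=0}^{k*} (k + √(T − k))`. -/
theorem reachExplore_gt_goExplore (kstar : ℕ) (hk : 1 ≤ kstar) (T : ℝ)
    (hT : (kstar : ℝ) + 1 ≤ T) :
    (kstar : ℝ) + Real.sqrt (T - kstar)
      > (1 / ((kstar : ℝ) + 1)) *
        ∑ k ∈ Finset.range (kstar + 1), ((k : ℝ) + Real.sqrt (T - k)) := by
  set s := Real.sqrt (T - kstar) with hs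
  have h1 : (1 : ℝ) ≤ T - kstar := by linarith
  have hs2 : s ^ 2 = T - kstar := Real.sq_sqrt (by linarith)
  have hs1 : 1 ≤ s := by
    rw [hs, show (1:ℝ) = Real.sqrt 1 by simp]
    exact Real.sqrt_le_sqrt h1
  have key : ∀ k ∈ Finset.range (kstar + 1),
      (k : ℝ) + Real.sqrt (T - k) ≤ (kstar : ℝ) + s := by
    intro k hkm
    have hkle : (k : ℝ) ≤ kstar := by
      exact_mod_cast Nat.lt_succ_iff.mp (Finset.mem_range.mp hkm)
    have : Real.sqrt (T - k) ≤ ((kstar : ℝ) - k) + s := by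
      rw [Real.sqrt_le_iff]
      constructor
      · linarith
      · nlinarith [hs2, hs1, hkle]
    linarith
  have key0 : (0 : ℝ) + Real.sqrt (T - (0:ℕ)) < (kstar : ℝ) + s := by
    have hk1 : (1 : ℝ) ≤ kstar := by exact_mod_cast hk
    have : Real.sqrt (T - (0:ℕ)) < (kstar : ℝ) + s := by
      rw [Real.sqrt_lt' (by linarith)]
      push_cast
      nlinarith [hs2, hs1, hk1]
    linarith
  have hsum : ∑ k ∈ Finset.range (kstar + 1), ((k : ℝ) + Real.sqrt (T - k))
      < ((kstar : ℝ) + 1) * ((kstar : ℝ) + s) := by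
    calc ∑ k ∈ Finset.range (kstar + 1), ((k : ℝ) + Real.sqrt (T - k))
        < ∑ _k ∈ Finset.range (kstar + 1), ((kstar : ℝ) + s) :=
          Finset.sum_lt_sum key
            ⟨0, Finset.mem_range.mpr (Nat.succ_pos _), by simpa using key0⟩
      _ = ((kstar : ℝ) + 1) * ((kstar : ℝ) + s) := by
          simp [Finset.sum_const]; ring
  have hpos : (0 : ℝ) < (kstar : ℝ) + 1 := by positivity
  rw [gt_iff_lt, div_mul_eq_mul_div, one_mul, div_lt_iff₀ hpos]
  linarith [hsum]
end
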